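/- Let 0 < q < 1 and let k ≥ 1 be an integer. Then ∏_{i=0}^{2k−1} Γ_{q²}((i+1)/2) / Γ_{q²}(k + (i+1)/2) = ([2]_q)^{2k²} / [2k−1]_q!! · ∏_{j=1}^{2k−1} [j]_q! / [2j]_q!. -/

import Mathlib

open MeasureTheory Finset Filter

noncomputable section

/-- The point `(e^{2πiθ_1}, …, e^{2πiθ_n})` on the `n`-torus. -/
def torusPoint {n : ℕ} (θ : Fin n → ℝ) : Fin n → ℂ :=
  fun j => Complex.exp (2 * Real.pi * Complex.I * (θ j))

/-- Mean value of a real-valued function on the `n`-torus with respect to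
the (not necessarily normalized) weight `w`. -/
def torusAvg {n : ℕ} (w : (Fin n → ℂ) → ℝ) (f : (Fin n → ℂ) → ℝ) : ℝ :=
  (∫ θ in Set.Icc (0 : Fin n → ℝ) 1, f (torusPoint θ) * w (torusPoint θ)) /
    ∫ θ in Set.Icc (0 : Fin n → ℝ) 1, w (torusPoint θ)

/-- Mean value of a complex-valued function on the `n`-torus with respect to
the weight `w`. -/
def torusAvgC {n : ℕ} (w : (Fin n → ℂ) → ℝ) (f : (Fin n → ℂ) → ℂ) : ℂ :=
  (∫ θ in Set.Icc (0 : Fin n → ℝ) 1, f (torusPoint θ) * (w (torusPoint θ) : ℂ)) /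
    ∫ θ in Set.Icc (0 : Fin n → ℝ) 1, (w (torusPoint θ) : ℂ)

/-- Infinite q-Pochhammer symbol `(a;q)_∞` (complex `a`, real nome `q`). -/
def qPochC (a : ℂ) (q : ℝ) : ℂ := ∏' r : ℕ, (1 - a * (q : ℂ) ^ r)

/-- Infinite q-Pochhammer symbol `(a;q)_∞` (real version). -/
def qPochR (a q : ℝ) : ℝ := ∏' r : ℕ, (1 - a * q ^ r)

/-- Macdonald weight function `Δ^Mac(z;q,t)`. -/
def deltaMac {n : ℕ} (q t : ℝ) (z : Fin n → ℂ) : ℝ :=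
  ∏ i : Fin n, ∏ j ∈ Finset.univ.filter (fun j => i < j),
    ‖qPochC (z i * (z j)⁻¹) q / qPochC ((t : ℂ) * (z i * (z j)⁻¹)) q‖ ^ 2

/-- `Ψ^A(z;η) = ∏_j (1 + η z_j)`. -/
def psiA {n : ℕ} (z : Fin n → ℂ) (η : ℂ) : ℂ := ∏ j : Fin n, (1 + η * z j)

/-- The `q`-gamma function `Γ_q(x) = (1-q)^{1-x} (q;q)_∞ / (q^x;q)_∞` for `0<q<1`. -/
def qGamma (q x : ℝ) : ℝ := (1 - q) ^ (1 - x) * qPochR q q / qPochR (q ^ x) q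

/-- The `q`-integer `[n]_q = (1-q^n)/(1-q)`. -/
def qInt (q : ℝ) (n : ℕ) : ℝ := (1 - q ^ n) / (1 - q)

/-- The `q`-factorial `[n]_q! = [n]_q [n-1]_q ⋯ [1]_q`. -/
def qFact (q : ℝ) (n : ℕ) : ℝ := ∏ i ∈ Finset.range n, qInt q (i + 1)

/-- The odd `q`-double factorial `[2k-1]_q!! = [2k-1]_q [2k-3]_q ⋯ [3]_q [1]_q`. -/
def qOddDoubleFact (q : ℝ) (k : ℕ) : ℝ := ∏ i ∈ Finset.range k, qInt q (2 * i + 1)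

section aux
variable {a q : ℝ}

lemma summable_log_aux (ha0 : 0 ≤ a) (ha1 : a < 1) (hq0 : 0 ≤ q) (hq1 : q < 1) :
    Summable fun r : ℕ => Real.log (1 - a * q ^ r) := by
  have h1a : 0 < 1 - a := by linarith
  apply Summable.of_abs
  have hb : Summable fun r : ℕ => (a / (1 - a)) * q ^ r :=
    (summable_geometric_of_lt_one hq0 hq1).mul_left _
  refine hb.of_nonneg_of_le (fun r => abs_nonneg _) (fun r => ?_)
  have hx0 : 0 ≤ a * q ^ r := mul_nonneg ha0 (pow_nonneg hq0 r)
  have hxa : a * q ^ r ≤ a := by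
    calc a * q ^ r ≤ a * 1 := by
          exact mul_le_mul_of_nonneg_left (pow_le_one₀ hq0 hq1.le) ha0
      _ = a := mul_one a
  have hx1 : a * q ^ r < 1 := lt_of_le_of_lt hxa ha1
  have hpos : 0 < 1 - a * q ^ r := by linarith
  have hlog : Real.log (1 - a * q ^ r) ≤ 0 :=
    Real.log_nonpos (by linarith) (by linarith)
  rw [abs_of_nonpos hlog]
  have := Real.log_le_sub_one_of_pos (x := (1 - a * q ^ r)⁻¹) (by positivity)
  rw [Real.log_inv] at this
  have h2 : (1 - a * q ^ r)⁻¹ - 1 = (a * q ^ r) / (1 - a * q ^ r) := by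
    field_simp
    ring
  rw [h2] at this
  calc -Real.log (1 - a * q ^ r) ≤ a * q ^ r / (1 - a * q ^ r) := this
    _ ≤ a * q ^ r / (1 - a) := div_le_div_of_nonneg_left hx0 h1a (by linarith)
    _ = a / (1 - a) * q ^ r := by ring


end aux
noncomputable section b
variable {a q : ℝ}

lemma factor_pos (ha0 : 0 ≤ a) (ha1 : a < 1) (hq0 : 0 ≤ q) (hq1 : q < 1) (r : ℕ) :
    0 < 1 - a * q ^ r := by
  have : a * q ^ r ≤ a * 1 := mul_le_mul_of_nonneg_left (pow_le_one₀ hq0 hq1.le) ha0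
  nlinarith

lemma hasProd_qPochR (ha0 : 0 ≤ a) (ha1 : a < 1) (hq0 : 0 ≤ q) (hq1 : q < 1) :
    HasProd (fun r : ℕ => 1 - a * q ^ r)
      (Real.exp (∑' r : ℕ, Real.log (1 - a * q ^ r))) := by
  have hs := (summable_log_aux ha0 ha1 hq0 hq1).hasSum
  have h2 := hs.rexp
  refine h2.congr fun s => Finset.prod_congr rfl fun r _ => ?_
  exact Real.exp_log (factor_pos ha0 ha1 hq0 hq1 r)

lemma multipliable_qPochR (ha0 : 0 ≤ a) (ha1 : a < 1) (hq0 : 0 ≤ q) (hq1 : q < 1) :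
    Multipliable fun r : ℕ => 1 - a * q ^ r :=
  ⟨_, hasProd_qPochR ha0 ha1 hq0 hq1⟩

lemma qPochR_pos (ha0 : 0 ≤ a) (ha1 : a < 1) (hq0 : 0 ≤ q) (hq1 : q < 1) :
    0 < qPochR a q := by
  rw [qPochR, (hasProd_qPochR ha0 ha1 hq0 hq1).tprod_eq]
  exact Real.exp_pos _

lemma qPochR_split (ha0 : 0 ≤ a) (ha1 : a < 1) (hq0 : 0 ≤ q) (hq1 : q < 1) (n : ℕ) :
    qPochR a q = (∏ r ∈ range n, (1 - a * q ^ r)) * qPochR (a * q ^ n) q := by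
  have han0 : 0 ≤ a * q ^ n := mul_nonneg ha0 (pow_nonneg hq0 n)
  have han1 : a * q ^ n < 1 := by
    have := factor_pos ha0 ha1 hq0 hq1 n; linarith
  have hm : Multipliable fun r : ℕ => 1 - a * q ^ (r + n) := by
    have := multipliable_qPochR han0 han1 hq0 hq1
    refine this.congr fun r => ?_
    rw [pow_add]; ring
  have h := Multipliable.prod_mul_tprod_nat_mul' (f := fun r : ℕ => 1 - a * q ^ r) (k := n) hm
  have h2 : (∏' i : ℕ, (1 - a * q ^ n * q ^ i)) = ∏' i : ℕ, (1 - a * q ^ (i + n)) :=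
    tprod_congr fun r => by rw [pow_add]; ring
  rw [qPochR, qPochR, h2, ← h]

end b
lemma q2_rpow (q : ℝ) (hq0 : 0 < q) (x : ℝ) : (q ^ 2 : ℝ) ^ x = q ^ (2 * x) := by
  rw [← Real.rpow_natCast q 2, ← Real.rpow_mul hq0.le]
  norm_num

lemma gamma_ratio (q : ℝ) (hq0 : 0 < q) (hq1 : q < 1) (k i : ℕ) :
    qGamma (q ^ 2) (((i : ℝ) + 1) / 2) / qGamma (q ^ 2) ((k : ℝ) + ((i : ℝ) + 1) / 2)
      = (1 - q ^ 2) ^ k / ∏ r ∈ range k, (1 - q ^ (i + 1) * (q ^ 2) ^ r) := by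
  have hQ0 : (0 : ℝ) < q ^ 2 := by positivity
  have hQ1 : q ^ 2 < 1 := by nlinarith
  have hC0 : (0 : ℝ) < 1 - q ^ 2 := by linarith
  have hA1 : (q ^ 2 : ℝ) ^ (((i : ℝ) + 1) / 2) = q ^ (i + 1) := by
    rw [q2_rpow q hq0, ← Real.rpow_natCast q (i + 1)]
    push_cast; ring_nf
  have hA2 : (q ^ 2 : ℝ) ^ ((k : ℝ) + ((i : ℝ) + 1) / 2) = q ^ (2 * k + i + 1) := by
    rw [q2_rpow q hq0, ← Real.rpow_natCast q (2 * k + i + 1)]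
    push_cast; ring_nf
  have ha0 : (0 : ℝ) ≤ q ^ (i + 1) := by positivity
  have ha1 : q ^ (i + 1) < 1 := pow_lt_one₀ hq0.le hq1 (Nat.succ_ne_zero i)
  have hsplit : qPochR (q ^ (i + 1)) (q ^ 2)
      = (∏ r ∈ range k, (1 - q ^ (i + 1) * (q ^ 2) ^ r)) * qPochR (q ^ (2 * k + i + 1)) (q ^ 2) := by
    have := qPochR_split ha0 ha1 hQ0.le hQ1 (a := q ^ (i + 1)) (q := q ^ 2) k
    rw [this]
    congr 2
    rw [← pow_mul, ← pow_add]
    ring_nf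
  have hrpow : ((1 : ℝ) - q ^ 2) ^ (1 - ((i : ℝ) + 1) / 2)
      = (1 - q ^ 2) ^ (1 - ((k : ℝ) + ((i : ℝ) + 1) / 2)) * (1 - q ^ 2) ^ (k : ℕ) := by
    rw [← Real.rpow_natCast (1 - q ^ 2) k, ← Real.rpow_add hC0]
    ring_nf
  have hP1 : 0 < ∏ r ∈ range k, (1 - q ^ (i + 1) * (q ^ 2) ^ r) :=
    Finset.prod_pos fun r _ => factor_pos ha0 ha1 hQ0.le hQ1 r
  have hp2 : 0 < qPochR (q ^ (2 * k + i + 1)) (q ^ 2) :=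
    qPochR_pos (by positivity) (pow_lt_one₀ hq0.le hq1 (by omega)) hQ0.le hQ1
  have hpc : 0 < qPochR (q ^ 2) (q ^ 2) := qPochR_pos hQ0.le hQ1 hQ0.le hQ1
  have hB : 0 < ((1 : ℝ) - q ^ 2) ^ (1 - ((k : ℝ) + ((i : ℝ) + 1) / 2)) :=
    Real.rpow_pos_of_pos hC0 _
  rw [qGamma, qGamma, hA1, hA2, hsplit, hrpow]
  field_simp
/-- auxiliary factor `1 - q^(m+1)` -/
def fq (q : ℝ) (m : ℕ) : ℝ := 1 - q ^ (m + 1)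

/-- auxiliary partial product `∏_{m<n} (1 - q^(m+1))` -/
def Fq (q : ℝ) (n : ℕ) : ℝ := ∏ m ∈ range n, fq q m

lemma fq_pos {q : ℝ} (hq0 : 0 < q) (hq1 : q < 1) (m : ℕ) : 0 < fq q m := by
  have : q ^ (m + 1) < 1 := pow_lt_one₀ hq0.le hq1 (Nat.succ_ne_zero m)
  simp only [fq]; linarith

lemma Fq_pos {q : ℝ} (hq0 : 0 < q) (hq1 : q < 1) (n : ℕ) : 0 < Fq q n :=
  Finset.prod_pos fun m _ => fq_pos hq0 hq1 m

lemma prod_range_two_mul (h : ℕ → ℝ) (n : ℕ) :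
    ∏ j ∈ range (2 * n), h j = (∏ r ∈ range n, h (2 * r)) * ∏ r ∈ range n, h (2 * r + 1) := by
  induction n with
  | zero => simp
  | succ n ih =>
    have h2 : 2 * (n + 1) = 2 * n + 1 + 1 := by ring
    rw [h2, prod_range_succ, prod_range_succ, ih, prod_range_succ, prod_range_succ]
    ring

lemma key_identity (q : ℝ) (t : ℕ) :
    (∏ r ∈ range (t + 1), Fq q (2 * (t + 1) + 2 * r)) * ∏ j ∈ range (2 * t + 1), Fq q (j + 1)
      = ((∏ r ∈ range (t + 1), Fq q (2 * r)) * ∏ r ∈ range (t + 1), fq q (2 * r)) *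
          ∏ j ∈ range (2 * t + 1), Fq q (2 * j + 2) := by
  have hA : (∏ r ∈ range (t + 1), Fq q (2 * r)) * ∏ r ∈ range (t + 1), fq q (2 * r)
      = ∏ r ∈ range (t + 1), Fq q (2 * r + 1) := by
    rw [← Finset.prod_mul_distrib]
    exact Finset.prod_congr rfl fun r _ => (Finset.prod_range_succ (fq q) (2 * r)).symm
  have hB : ∏ j ∈ range (2 * t + 1), Fq q (j + 1)
      = (∏ r ∈ range (t + 1), Fq q (2 * r + 1)) * ∏ r ∈ range t, Fq q (2 * r + 2) := by
    have e : ∏ x ∈ range t, Fq q (2 * x + 1 + 1) = ∏ x ∈ range t, Fq q (2 * x + 2) :=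
      Finset.prod_congr rfl fun x _ => by norm_num
    rw [Finset.prod_range_succ, prod_range_two_mul (fun j => Fq q (j + 1)) t,
      Finset.prod_range_succ, e]
    ring
  have hC : ∏ j ∈ range (2 * t + 1), Fq q (2 * j + 2)
      = (∏ j ∈ range t, Fq q (2 * j + 2)) * ∏ r ∈ range (t + 1), Fq q (2 * (t + 1) + 2 * r) := by
    have h1 : 2 * t + 1 = t + (t + 1) := by ring
    rw [h1, Finset.prod_range_add]
    congr 1
    exact Finset.prod_congr rfl fun r _ => by congr 1; ring
  rw [hA, hB, hC]
  ring
lemma two_mul_sum_range_succ (n : ℕ) : 2 * ∑ j ∈ range n, (j + 1) = n * (n + 1) := by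
  induction n with
  | zero => simp
  | succ n ih => rw [Finset.sum_range_succ, Nat.mul_add, ih]; ring

lemma sum_range_two_t (t : ℕ) : ∑ j ∈ range (2 * t + 1), (j + 1) = (t + 1) * (2 * t + 1) := by
  refine Nat.eq_of_mul_eq_mul_left (show 0 < 2 by norm_num) ?_
  rw [two_mul_sum_range_succ]; ring

lemma qFact_eq (q : ℝ) (n : ℕ) : qFact q n = Fq q n / (1 - q) ^ n := by
  simp only [qFact, qInt, Fq, fq, Finset.prod_div_distrib, Finset.prod_const,
    Finset.card_range]

lemma qOdd_eq (q : ℝ) (t : ℕ) :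
    qOddDoubleFact q (t + 1) = (∏ r ∈ range (t + 1), fq q (2 * r)) / (1 - q) ^ (t + 1) := by
  simp only [qOddDoubleFact, qInt, fq, Finset.prod_div_distrib, Finset.prod_const,
    Finset.card_range]

lemma rhs_eval (q : ℝ) (hq0 : 0 < q) (hq1 : q < 1) (t : ℕ) :
    qInt q 2 ^ (2 * (t + 1) ^ 2) / qOddDoubleFact q (t + 1) *
        ∏ j ∈ range (2 * t + 1), qFact q (j + 1) / qFact q (2 * (j + 1))
      = (1 - q ^ 2) ^ (2 * (t + 1) ^ 2) * (∏ j ∈ range (2 * t + 1), Fq q (j + 1)) /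
          ((∏ r ∈ range (t + 1), fq q (2 * r)) * ∏ j ∈ range (2 * t + 1), Fq q (2 * j + 2)) := by
  have h1q : (0 : ℝ) < 1 - q := by linarith
  have hterm : ∀ j : ℕ, qFact q (j + 1) / qFact q (2 * (j + 1))
      = Fq q (j + 1) * (1 - q) ^ (j + 1) / Fq q (2 * j + 2) := by
    intro j
    rw [qFact_eq, qFact_eq, show 2 * (j + 1) = 2 * j + 2 from by ring]
    have h1 := (Fq_pos hq0 hq1 (j + 1)).ne'
    have h2 := (Fq_pos hq0 hq1 (2 * j + 2)).ne'
    have h3 : (1 - q) ≠ 0 := by linarith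
    field_simp
    ring
  have hprod : ∏ j ∈ range (2 * t + 1), qFact q (j + 1) / qFact q (2 * (j + 1))
      = (∏ j ∈ range (2 * t + 1), Fq q (j + 1)) * (1 - q) ^ ((t + 1) * (2 * t + 1)) /
          ∏ j ∈ range (2 * t + 1), Fq q (2 * j + 2) := by
    rw [Finset.prod_congr rfl fun j _ => hterm j, Finset.prod_div_distrib,
      Finset.prod_mul_distrib, Finset.prod_pow_eq_pow_sum, sum_range_two_t]
  have hInt : qInt q 2 = (1 - q ^ 2) / (1 - q) := rfl
  rw [hprod, hInt, qOdd_eq, div_pow]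
  have hFj : (∏ j ∈ range (2 * t + 1), Fq q (j + 1)) ≠ 0 :=
    ne_of_gt (Finset.prod_pos fun j _ => Fq_pos hq0 hq1 _)
  have hFj2 : (∏ j ∈ range (2 * t + 1), Fq q (2 * j + 2)) ≠ 0 :=
    ne_of_gt (Finset.prod_pos fun j _ => Fq_pos hq0 hq1 _)
  have hfr : (∏ r ∈ range (t + 1), fq q (2 * r)) ≠ 0 :=
    ne_of_gt (Finset.prod_pos fun r _ => fq_pos hq0 hq1 _)
  have h1q' : (1 - q) ≠ 0 := ne_of_gt h1q
  field_simp
  ring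
lemma lhs_eval (q : ℝ) (hq0 : 0 < q) (hq1 : q < 1) (k : ℕ) :
    ∏ i ∈ range (2 * k),
        qGamma (q ^ 2) (((i : ℝ) + 1) / 2) / qGamma (q ^ 2) ((k : ℝ) + ((i : ℝ) + 1) / 2)
      = (1 - q ^ 2) ^ (2 * k ^ 2) * (∏ r ∈ range k, Fq q (2 * r)) /
          ∏ r ∈ range k, Fq q (2 * k + 2 * r) := by
  rw [Finset.prod_congr rfl fun i _ => gamma_ratio q hq0 hq1 k i,
    Finset.prod_div_distrib, Finset.prod_const, Finset.card_range]
  have hD : ∏ i ∈ range (2 * k), ∏ r ∈ range k, (1 - q ^ (i + 1) * (q ^ 2) ^ r)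
      = (∏ r ∈ range k, Fq q (2 * k + 2 * r)) / ∏ r ∈ range k, Fq q (2 * r) := by
    have h1 : ∀ i r : ℕ, 1 - q ^ (i + 1) * (q ^ 2) ^ r = fq q (i + 2 * r) := by
      intro i r
      simp only [fq]
      rw [← pow_mul, ← pow_add]
      ring
    calc ∏ i ∈ range (2 * k), ∏ r ∈ range k, (1 - q ^ (i + 1) * (q ^ 2) ^ r)
        = ∏ r ∈ range k, ∏ i ∈ range (2 * k), fq q (2 * r + i) := by
          rw [Finset.prod_comm]
          exact Finset.prod_congr rfl fun r _ => Finset.prod_congr rfl fun i _ => by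
            rw [h1 i r]; congr 1; omega
      _ = ∏ r ∈ range k, Fq q (2 * k + 2 * r) / Fq q (2 * r) := by
          refine Finset.prod_congr rfl fun r _ => ?_
          have hadd := Finset.prod_range_add (fq q) (2 * r) (2 * k)
          have hne := (Fq_pos hq0 hq1 (2 * r)).ne'
          rw [eq_div_iff hne]
          rw [show 2 * k + 2 * r = 2 * r + 2 * k from by ring]
          rw [Fq, Fq, hadd]
          ring
      _ = (∏ r ∈ range k, Fq q (2 * k + 2 * r)) / ∏ r ∈ range k, Fq q (2 * r) :=
          Finset.prod_div_distrib _ _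
  rw [hD]
  have hnum : (∏ r ∈ range k, Fq q (2 * k + 2 * r)) ≠ 0 :=
    ne_of_gt (Finset.prod_pos fun r _ => Fq_pos hq0 hq1 _)
  have hden : (∏ r ∈ range k, Fq q (2 * r)) ≠ 0 :=
    ne_of_gt (Finset.prod_pos fun r _ => Fq_pos hq0 hq1 _)
  rw [div_div_eq_mul_div, ← pow_mul, show k * (2 * k) = 2 * k ^ 2 from by ring]


/-- Example 4.3, equation (4.4): evaluation of `𝓕_4^q(2k)`. -/
theorem qGamma_ratio_f4 (q : ℝ) (hq0 : 0 < q) (hq1 : q < 1) (k : ℕ) (hk : 1 ≤ k) :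
    ∏ i ∈ Finset.range (2 * k),
        qGamma (q ^ 2) (((i : ℝ) + 1) / 2) /
          qGamma (q ^ 2) ((k : ℝ) + ((i : ℝ) + 1) / 2) =
    qInt q 2 ^ (2 * k ^ 2) / qOddDoubleFact q k *
      ∏ j ∈ Finset.range (2 * k - 1), qFact q (j + 1) / qFact q (2 * (j + 1)) := by
  obtain ⟨t, rfl⟩ : ∃ t, k = t + 1 := ⟨k - 1, by omega⟩
  rw [show 2 * (t + 1) - 1 = 2 * t + 1 from by omega]
  rw [lhs_eval q hq0 hq1 (t + 1), rhs_eval q hq0 hq1 t]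
  have hnum : (0 : ℝ) < ∏ r ∈ range (t + 1), Fq q (2 * (t + 1) + 2 * r) :=
    Finset.prod_pos fun r _ => Fq_pos hq0 hq1 _
  have hden : (0 : ℝ) < (∏ r ∈ range (t + 1), fq q (2 * r)) *
      ∏ j ∈ range (2 * t + 1), Fq q (2 * j + 2) :=
    mul_pos (Finset.prod_pos fun r _ => fq_pos hq0 hq1 _)
      (Finset.prod_pos fun j _ => Fq_pos hq0 hq1 _)
  rw [div_eq_div_iff (ne_of_gt hnum) (ne_of_gt hden)]
  linear_combination (-((1 : ℝ) - q ^ 2) ^ (2 * (t + 1) ^ 2)) * key_identity q t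

end
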